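/- For every integer d ≥ 1 and every positive integer N, there exist a graph G and a vertex u of G such that f_d(G,u) − f(G,u) ≥ N and f_d(G,u)/f(G,u) ≥ N; that is, the gap and ratio between the distance-restricted firefighter number and the ordinary firefighter number can be arbitrarily large for any fixed d. -/

import Mathlib

/- Distance-restricted firefighter game (Burgess, Marcoux, Pike, arXiv:2204.01908).

At time 0 a fire breaks out at the set `F` of vertices and each firefighter is placed on
(protects) a vertex not in `F`.  At each subsequent time step the fire spreads to every
unburnt, unprotected neighbour of a burning vertex, and then each firefighter moves to a
vertex at distance at most `d` from its current vertex in the subgraph induced by the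
unburnt vertices (i.e. along a walk of length ≤ `d` through unburnt vertices).
Occupied vertices are protected forever.  The fire is contained if the burnt set
stabilizes after finitely many steps. -/

namespace Firefight

variable {V : Type*}

/-- There is a walk in `G` from `u` to `v` of length at most `d` all of whose vertices
(including the endpoints) lie in `S`. -/
def ReachWithin (G : SimpleGraph V) (S : Set V) (d : ℕ) (u v : V) : Prop :=
  ∃ p : G.Walk u v, p.length ≤ d ∧ ∀ x ∈ p.support, x ∈ S

/-- The set of burnt vertices at each time: `F` is the set initially on fire, and
`prot t` is the set of vertices that are protected when the fire spreads at step `t+1`. -/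
def burnt (G : SimpleGraph V) (F : Set V) (prot : ℕ → Set V) : ℕ → Set V
  | 0 => F
  | t + 1 => burnt G F prot t ∪ {v | v ∉ prot t ∧ ∃ w ∈ burnt G F prot t, G.Adj w v}

/-- The set of vertices protected by time `t`: all vertices occupied by some firefighter
at some time `s ≤ t`, where `pos s i` is the vertex occupied by firefighter `i` at time `s`. -/
def protOf {k : ℕ} (pos : ℕ → Fin k → V) (t : ℕ) : Set V :=
  {v | ∃ s ≤ t, ∃ i, pos s i = v}

/-- `k` firefighters, each moving distance at most `d` per turn within the unburnt subgraph,
can contain a fire starting at `F`, the burnt set stabilizing by time `T`. -/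
def CanContainIn (G : SimpleGraph V) (d k : ℕ) (F : Set V) (T : ℕ) : Prop :=
  ∃ pos : ℕ → Fin k → V,
    (∀ i, pos 0 i ∉ F) ∧
    (∀ t i, ReachWithin G (burnt G F (protOf pos) (t + 1))ᶜ d (pos t i) (pos (t + 1) i)) ∧
    ∀ t, burnt G F (protOf pos) t ⊆ burnt G F (protOf pos) T

/-- `k` firefighters, each moving distance at most `d` per turn within the unburnt subgraph,
can contain a fire starting at `F`. -/
def CanContain (G : SimpleGraph V) (d k : ℕ) (F : Set V) : Prop :=
  ∃ T, CanContainIn G d k F T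

/-- The distance-restricted firefighter number `f_d(G,u)`: the least number of firefighters
that can contain a fire starting at `u` in the distance-`d` game. -/
noncomputable def fdNum (G : SimpleGraph V) (d : ℕ) (u : V) : ℕ :=
  sInf {k | CanContain G d k {u}}

/-- The ordinary (unrestricted) firefighter game: on each turn the `k` firefighters may
protect any `k` unburnt vertices (protecting an already protected vertex wastes a move,
so this also allows protecting fewer). -/
def CanContainFree (G : SimpleGraph V) (k : ℕ) (F : Set V) : Prop :=
  ∃ pos : ℕ → Fin k → V,
    (∀ t i, pos t i ∉ burnt G F (protOf pos) t) ∧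
    ∃ T, ∀ t, burnt G F (protOf pos) t ⊆ burnt G F (protOf pos) T

/-- The ordinary firefighter number `f(G,u)`. -/
noncomputable def ffNum (G : SimpleGraph V) (u : V) : ℕ :=
  sInf {k | CanContainFree G k {u}}

-- basic lemmas
lemma burnt_succ (G : SimpleGraph V) (F : Set V) (prot : ℕ → Set V) (t : ℕ) :
    burnt G F prot (t+1) =
      burnt G F prot t ∪ {v | v ∉ prot t ∧ ∃ w ∈ burnt G F prot t, G.Adj w v} := rfl

lemma burnt_mono (G : SimpleGraph V) (F : Set V) (prot : ℕ → Set V) :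
    Monotone (burnt G F prot) := by
  apply monotone_nat_of_le_succ
  intro t
  rw [burnt_succ]
  exact Set.subset_union_left

-- the spider graph
def sAdj (N : ℕ) : Option (Fin (N+1) × ℕ) → Option (Fin (N+1) × ℕ) → Prop
  | none, none => False
  | none, some (_, n) => n = 0
  | some (_, n), none => n = 0
  | some (i, n), some (j, m) => i = j ∧ (m = n + 1 ∨ n = m + 1)

def spider (N : ℕ) : SimpleGraph (Option (Fin (N+1) × ℕ)) where
  Adj := sAdj N
  symm := by
    refine ⟨?_⟩
    rintro (_ | ⟨i, n⟩) (_ | ⟨j, m⟩) h <;> simp only [sAdj] at * <;> tauto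
  loopless := by
    refine ⟨?_⟩
    rintro (_ | ⟨i, n⟩) h <;> simp only [sAdj] at h <;> omega

@[simp] lemma spider_adj_none_some {N : ℕ} {i : Fin (N+1)} {n : ℕ} :
    (spider N).Adj none (some (i, n)) ↔ n = 0 := Iff.rfl
@[simp] lemma spider_adj_some_none {N : ℕ} {i : Fin (N+1)} {n : ℕ} :
    (spider N).Adj (some (i, n)) none ↔ n = 0 := Iff.rfl
@[simp] lemma spider_adj_none_none {N : ℕ} :
    ¬ (spider N).Adj none none := id
@[simp] lemma spider_adj_some_some {N : ℕ} {i j : Fin (N+1)} {n m : ℕ} :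
    (spider N).Adj (some (i, n)) (some (j, m)) ↔ i = j ∧ (m = n + 1 ∨ n = m + 1) := Iff.rfl

-- fire depth bound
lemma burnt_depth {N : ℕ} (prot : ℕ → Set (Option (Fin (N+1) × ℕ))) :
    ∀ t (i : Fin (N+1)) (n : ℕ),
      some (i, n) ∈ burnt (spider N) {none} prot t → n + 1 ≤ t := by
  intro t
  induction t with
  | zero => intro i n h; simp [burnt] at h
  | succ t ih =>
    intro i n h
    rcases h with h | ⟨-, w, hw, hadj⟩
    · exact le_trans (ih i n h) (Nat.le_succ t)
    · rcases w with _ | ⟨j, m⟩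
      · simp at hadj; omega
      · rcases hadj with ⟨rfl, hc⟩
        have := ih j m hw
        omega

-- fire spreads along an unprotected ray
lemma spread {N : ℕ} (prot : ℕ → Set (Option (Fin (N+1) × ℕ))) (r : Fin (N+1)) :
    ∀ n, (∀ t m, m ≤ n → some (r, m) ∉ prot t) →
      some (r, n) ∈ burnt (spider N) {none} prot (n+1) := by
  intro n
  induction n with
  | zero =>
    intro h
    refine Or.inr ⟨h 0 0 le_rfl, none, rfl, rfl⟩
  | succ n ih =>
    intro h
    refine Or.inr ⟨h (n+1) (n+1) le_rfl, some (r, n), ?_, ?_⟩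
    · exact ih (fun t m hm => h t m (le_trans hm (Nat.le_succ n)))
    · exact ⟨rfl, Or.inl rfl⟩

-- walks avoiding the center stay in one ray
lemma walk_ray {N : ℕ} :
    ∀ {a b : Option (Fin (N+1) × ℕ)} (p : (spider N).Walk a b),
      (none ∉ p.support) → ∀ (i : Fin (N+1)) (n : ℕ), a = some (i, n) →
        ∃ m, b = some (i, m) := by
  intro a b p
  induction p with
  | nil => intro _ i n rfl; exact ⟨n, rfl⟩
  | @cons u v w hadj p ih =>
    intro hs i n hu
    subst hu
    rcases v with _ | ⟨j, m⟩
    · exact absurd (by simp) hs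
    · obtain ⟨m', hm'⟩ := ih (fun hc => hs (by simp [hc])) j m rfl
      exact ⟨m', by rw [hm', hadj.1]⟩

-- the free-game strategy for one firefighter
def ffpos (N : ℕ) : ℕ → Fin 1 → Option (Fin (N+1) × ℕ) :=
  fun t _ => some (⟨min t N, by omega⟩, min t N)

lemma ffpos_diag {N : ℕ} (t : ℕ) (j : Fin (N+1)) (hj : j.val ≤ t) :
    some (j, j.val) ∈ protOf (ffpos N) t := by
  refine ⟨j.val, hj, ⟨0, Nat.zero_lt_one⟩, ?_⟩
  show (some (⟨min j.val N, by omega⟩, min j.val N) : Option (Fin (N+1) × ℕ)) = some (j, j.val)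
  have hjN : j.val ≤ N := by omega
  simp only [Option.some.injEq, Prod.mk.injEq, Fin.ext_iff]
  omega

lemma ffpos_form {N : ℕ} (t : ℕ) (v : Option (Fin (N+1) × ℕ)) (hv : v ∈ protOf (ffpos N) t) :
    ∃ j : Fin (N+1), v = some (j, j.val) := by
  obtain ⟨s, -, i, rfl⟩ := hv
  exact ⟨⟨min s N, by omega⟩, rfl⟩

lemma ffpos_inv {N : ℕ} :
    ∀ t, ∀ v ∈ burnt (spider N) {none} (protOf (ffpos N)) t,
      v = none ∨ ∃ i : Fin (N+1), ∃ n : ℕ, v = some (i, n) ∧ n < i.val ∧ n + 1 ≤ t := by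
  intro t
  induction t with
  | zero => intro v hv; exact Or.inl hv
  | succ t ih =>
    intro v hv
    rcases hv with hv | ⟨hvp, w, hw, hadj⟩
    · rcases ih v hv with h | ⟨i, n, rfl, h1, h2⟩
      · exact Or.inl h
      · exact Or.inr ⟨i, n, rfl, h1, by omega⟩
    · rcases ih w hw with rfl | ⟨i, n, rfl, h1, h2⟩
      · rcases v with _ | ⟨j, m⟩
        · exact Or.inl rfl
        · have hm : m = 0 := hadj
          subst hm
          have hj : 0 < j.val := by
            rcases Nat.eq_zero_or_pos j.val with hj0 | hj0
            · exact absurd (hj0 ▸ ffpos_diag t j (by omega)) hvp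
            · exact hj0
          exact Or.inr ⟨j, 0, rfl, hj, by omega⟩
      · rcases v with _ | ⟨j, m⟩
        · exact Or.inl rfl
        · obtain ⟨hij, hcase⟩ := hadj
          subst hij
          rcases hcase with rfl | rfl
          · rcases lt_or_eq_of_le (show n + 1 ≤ i.val by omega) with hlt | heq
            · exact Or.inr ⟨i, n+1, rfl, hlt, by omega⟩
            · exact absurd (by simpa [heq] using ffpos_diag t i (by omega)) hvp
          · exact Or.inr ⟨i, m, rfl, by omega, by omega⟩

lemma free_one {N : ℕ} :
    (∀ t i, ffpos N t i ∉ burnt (spider N) {none} (protOf (ffpos N)) t) ∧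
      ∀ t, burnt (spider N) {none} (protOf (ffpos N)) t
        ⊆ burnt (spider N) {none} (protOf (ffpos N)) (N+1) := by
  constructor
  · intro t i hb
    rcases ffpos_inv t _ hb with h | ⟨j, n, hj, h1, h2⟩
    · exact Option.some_ne_none _ h
    · rw [show ffpos N t i = some (⟨min t N, by omega⟩, min t N) from rfl] at hj
      rw [Option.some.injEq, Prod.mk.injEq, Fin.ext_iff] at hj
      omega
  · intro t v hv
    rcases ffpos_inv t v hv with rfl | ⟨i, n, rfl, h1, h2⟩
    · exact burnt_mono _ _ _ (Nat.zero_le (N+1)) rfl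
    · have hs : some (i, n) ∈ burnt (spider N) {none} (protOf (ffpos N)) (n+1) := by
        apply spread
        intro s m hm hmem
        obtain ⟨j, hj⟩ := ffpos_form s _ hmem
        rw [Option.some.injEq, Prod.mk.injEq] at hj
        have : i = j := hj.1
        have : m = j.val := hj.2
        omega
      exact burnt_mono _ _ _ (by omega : n + 1 ≤ N + 1) hs

-- zero firefighters cannot contain in the free game
lemma free_not_zero {N : ℕ} : ¬ CanContainFree (spider N) 0 {none} := by
  rintro ⟨pos, -, T, hT⟩
  have hempty : ∀ t (v : Option (Fin (N+1) × ℕ)), v ∉ protOf pos t := by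
    rintro t v ⟨s, -, i, -⟩
    exact i.elim0
  have hb : some ((⟨0, by omega⟩ : Fin (N+1)), T)
      ∈ burnt (spider N) {none} (protOf pos) (T+1) :=
    spread _ _ T (fun t m _ => hempty t _)
  have := burnt_depth _ T _ T (hT (T+1) hb)
  omega

-- static strategy for the restricted game
def stpos (N : ℕ) : ℕ → Fin (N+1) → Option (Fin (N+1) × ℕ) :=
  fun _ i => some (i, 0)

lemma stpos_burnt {N : ℕ} :
    ∀ t, burnt (spider N) {none} (protOf (stpos N)) t = {none} := by
  intro t
  induction t with
  | zero => rfl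
  | succ t ih =>
    rw [burnt_succ, ih]
    apply Set.Subset.antisymm
    · rintro v (hv | ⟨hvp, w, hw, hadj⟩)
      · exact hv
      · rcases hw with rfl
        rcases v with _ | ⟨j, m⟩
        · rfl
        · have hm : m = 0 := hadj
          subst hm
          exact absurd ⟨0, Nat.zero_le t, j, rfl⟩ hvp
    · exact fun v hv => Or.inl hv

lemma restricted_upper {N d : ℕ} : CanContain (spider N) d (N+1) {none} := by
  refine ⟨0, stpos N, ?_, ?_, ?_⟩
  · intro i h
    exact Option.some_ne_none _ h
  · intro t i
    show ReachWithin (spider N) _ d (some (i, 0)) (some (i, 0))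
    refine ⟨SimpleGraph.Walk.nil, by simp, ?_⟩
    intro x hx
    rw [SimpleGraph.Walk.support_nil, List.mem_singleton] at hx
    subst hx
    rw [Set.mem_compl_iff, stpos_burnt]
    exact fun h => Option.some_ne_none _ h
  · intro t
    rw [stpos_burnt, stpos_burnt]

lemma restricted_lower {N d k : ℕ} (hk : k ≤ N) : ¬ CanContain (spider N) d k {none} := by
  rintro ⟨T, pos, h0, hreach, hT⟩
  have none_burnt : ∀ t, none ∈ burnt (spider N) {none} (protOf pos) t :=
    fun t => burnt_mono _ _ _ (Nat.zero_le t) rfl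
  have h0' : ∀ i, ∃ r m, pos 0 i = some (r, m) := by
    intro i
    rcases hp : pos 0 i with _ | ⟨r, m⟩
    · exact absurd (by rw [hp]; rfl) (h0 i)
    · exact ⟨r, m, rfl⟩
  choose ray m0 hray using h0'
  have hconst : ∀ t i, ∃ m, pos t i = some (ray i, m) := by
    intro t
    induction t with
    | zero => intro i; exact ⟨m0 i, hray i⟩
    | succ t ih =>
      intro i
      obtain ⟨m, hm⟩ := ih i
      obtain ⟨p, -, hsup⟩ := hreach t i
      have hns : none ∉ p.support := fun hc => (hsup none hc) (none_burnt (t+1))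
      exact walk_ray p hns (ray i) m hm
  have hsurj : ∃ r : Fin (N+1), ∀ i, ray i ≠ r := by
    by_contra h
    push_neg at h
    have := Fintype.card_le_of_surjective ray h
    simp only [Fintype.card_fin] at this
    omega
  obtain ⟨r, hr⟩ := hsurj
  have havoid : ∀ t m, some (r, m) ∉ protOf pos t := by
    rintro t m ⟨s, -, i, hsi⟩
    obtain ⟨m', hm'⟩ := hconst s i
    rw [hm'] at hsi
    rw [Option.some.injEq, Prod.mk.injEq] at hsi
    exact hr i hsi.1
  have hb : some (r, T) ∈ burnt (spider N) {none} (protOf pos) (T+1) :=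
    spread _ _ T (fun t m _ => havoid t m)
  have := burnt_depth _ T _ T (hT (T+1) hb)
  omega


/-- For every `d ≥ 1` and every positive integer `N`, there exist a graph `G` and a vertex
`u` such that both the difference `f_d(G,u) − f(G,u)` and the ratio `f_d(G,u) / f(G,u)` are
at least `N`: the gap between the distance-restricted and the ordinary firefighter numbers
can be arbitrarily large for any fixed `d`. -/
theorem restricted_vs_ordinary_gap_unbounded :
    ∀ d : ℕ, 1 ≤ d → ∀ N : ℕ, 0 < N →
      ∃ (V : Type) (G : SimpleGraph V) (u : V),
        0 < ffNum G u ∧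
        N ≤ fdNum G d u - ffNum G u ∧
        N * ffNum G u ≤ fdNum G d u := by
  intro d _ N _
  refine ⟨Option (Fin (N+1) × ℕ), spider N, none, ?_⟩
  have hfree : CanContainFree (spider N) 1 {none} :=
    ⟨ffpos N, free_one.1, N+1, free_one.2⟩
  have hne : {k | CanContainFree (spider N) k ({none} : Set _)}.Nonempty := ⟨1, hfree⟩
  have hff_le : ffNum (spider N) none ≤ 1 := Nat.sInf_le hfree
  have hff_pos : 0 < ffNum (spider N) none := by
    rcases Nat.eq_zero_or_pos (ffNum (spider N) none) with h | h
    · have hmem := Nat.sInf_mem hne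
      rw [show sInf {k | CanContainFree (spider N) k ({none} : Set _)}
          = ffNum (spider N) none from rfl, h] at hmem
      exact absurd hmem free_not_zero
    · exact h
  have hff : ffNum (spider N) none = 1 := le_antisymm hff_le hff_pos
  have hfd_ge : N + 1 ≤ fdNum (spider N) d none := by
    refine le_csInf ⟨N+1, restricted_upper⟩ ?_
    intro k hk
    by_contra h
    push_neg at h
    exact restricted_lower (by omega) hk
  exact ⟨hff_pos, by omega, by rw [hff]; omega⟩


end Firefight
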